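/- Fix an integer k ≥ 2 and let G=(V,E) be a finite simple graph such that EMH_{n,n}(G) = 0 (equivalently, ker(∂_{n,n} : EMC_{n,n}(G) → EMC_{n−1,n}(G)) = 0) for every 2 ≤ n ≤ k. Then the rank of ker(∂_{k,k} : MC_{k,k}(G) → MC_{k−1,k}(G)) equals 2·|E|; that is, rank(MH_{k,k}(G)) = 2|E| = rank(MH_{1,1}(G)). -/

import Mathlib

open scoped Classical

variable {V : Type*}

/-- Length of the walk described by a list of landmarks: sum of path-metric
distances between consecutive entries (`⊤`-valued if some pair is unreachable). -/
noncomputable def mlen (G : SimpleGraph V) : List V → ℕ∞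
  | [] => 0
  | [_] => 0
  | a :: b :: t => G.edist a b + mlen G (b :: t)

/-- A list of landmarks is a trail if consecutive entries are distinct and reachable. -/
def IsTrailList (G : SimpleGraph V) (l : List V) : Prop :=
  l.Chain' fun a b => a ≠ b ∧ G.Reachable a b

/-- `trails G k ℓ` is the set `T_{k,ℓ}(G)` of `k`-trails of length `ℓ`,
encoded as lists with `k+1` entries. -/
def trails (G : SimpleGraph V) (k ℓ : ℕ) : Set (List V) :=
  {l | l.length = k + 1 ∧ IsTrailList G l ∧ mlen G l = (ℓ : ℕ∞)}

/-- `etrails G k ℓ` is the set `ET_{k,ℓ}(G)` of eulerian `k`-trails of length `ℓ`. -/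
def etrails (G : SimpleGraph V) (k ℓ : ℕ) : Set (List V) :=
  {l | l ∈ trails G k ℓ ∧ l.Nodup}

/-- Boundary of a single generator: `∂_{·,ℓ}(x₀,…,x_k) = Σ_{i=1}^{k-1} (-1)^i ∂^i`,
where `∂^i` deletes the `i`-th landmark if this does not change the length. -/
noncomputable def bdryElt (G : SimpleGraph V) (ℓ : ℕ) (l : List V) : List V →₀ ℤ :=
  ∑ i ∈ Finset.Ioo 0 (l.length - 1),
    if mlen G (l.eraseIdx i) = (ℓ : ℕ∞) then ((-1 : ℤ) ^ i) • Finsupp.single (l.eraseIdx i) 1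
    else 0

/-- The magnitude differential (length parameter `ℓ`) on the ambient free abelian group
on all landmark lists.  Its restriction to `MC_{k,ℓ}(G)` (chains supported on
`trails G k ℓ`) is `∂_{k,ℓ}`. -/
noncomputable def bdry (G : SimpleGraph V) (ℓ : ℕ) : (List V →₀ ℤ) →ₗ[ℤ] (List V →₀ ℤ) :=
  Finsupp.lsum ℤ fun l => LinearMap.toSpanSingleton ℤ _ (bdryElt G ℓ l)

/-- `MC_{k,ℓ}(G)`: the free abelian group on `T_{k,ℓ}(G)`, realized as the submodule of
finitely supported `ℤ`-valued functions supported on trails. -/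
noncomputable def MC (G : SimpleGraph V) (k ℓ : ℕ) : Submodule ℤ (List V →₀ ℤ) :=
  Finsupp.supported ℤ ℤ (trails G k ℓ)

/-- `EMC_{k,ℓ}(G)`: the free abelian group on `ET_{k,ℓ}(G)`. -/
noncomputable def EMC (G : SimpleGraph V) (k ℓ : ℕ) : Submodule ℤ (List V →₀ ℤ) :=
  Finsupp.supported ℤ ℤ (etrails G k ℓ)

/-- `EMH_{k,k}(G) = ker(∂_{k,k}|_{EMC_{k,k}(G)})`, the first-diagonal eulerian magnitude
homology group (`EMC_{k+1,k}(G) = 0`, so homology is just the kernel). -/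
noncomputable def EMHkk (G : SimpleGraph V) (k : ℕ) : Submodule ℤ (List V →₀ ℤ) :=
  EMC G k k ⊓ LinearMap.ker (bdry G k)

/-- `MH_{k,k}(G) = ker(∂_{k,k}|_{MC_{k,k}(G)})`. -/
noncomputable def MHkk (G : SimpleGraph V) (k : ℕ) : Submodule ℤ (List V →₀ ℤ) :=
  MC G k k ⊓ LinearMap.ker (bdry G k)

/-- `β_{k,k}(G)`, the rank of `EMH_{k,k}(G)`. -/
noncomputable def emBetti (G : SimpleGraph V) (k : ℕ) : ℕ :=
  Module.finrank ℤ (EMHkk G k)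

/-- `c(G,H)`: the number of vertex subsets of `G` whose induced subgraph is isomorphic
to `H`. -/
noncomputable def subgraphCount (G : SimpleGraph V) {W : Type*} (H : SimpleGraph W) : ℕ :=
  Set.ncard {s : Set V | Nonempty ((G.induce s) ≃g H)}


section Aux
variable {G : SimpleGraph V}

lemma mlen_nil : mlen G [] = 0 := rfl
lemma mlen_single (a : V) : mlen G [a] = 0 := rfl
lemma mlen_cons_cons (a b : V) (t : List V) :
    mlen G (a :: b :: t) = G.edist a b + mlen G (b :: t) := rfl

lemma mlen_of_chain' : ∀ (l : List V), l.Chain' G.Adj → mlen G l = (l.length - 1 : ℕ)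
  | [], _ => rfl
  | [_], _ => rfl
  | a :: b :: t, h => by
    rw [List.Chain', List.isChain_cons_cons] at h
    rw [mlen_cons_cons, mlen_of_chain' (b :: t) h.2, SimpleGraph.edist_eq_one_iff_adj.mpr h.1]
    push_cast [List.length_cons]
    simp [add_comm]

lemma le_mlen_of_trail : ∀ (l : List V), IsTrailList G l → (l.length - 1 : ℕ) ≤ mlen G l
  | [], _ => by simp
  | [_], _ => by simp
  | a :: b :: t, h => by
    rw [IsTrailList, List.Chain', List.isChain_cons_cons] at h
    have h1 : (1 : ℕ∞) ≤ G.edist a b := by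
      rw [ENat.one_le_iff_ne_zero]
      simp [SimpleGraph.edist_eq_zero_iff, h.1.1]
    have h2 := le_mlen_of_trail (b :: t) h.2
    rw [mlen_cons_cons]
    calc ((a :: b :: t).length - 1 : ℕ) = (1 : ℕ∞) + ((b :: t).length - 1 : ℕ) := by
          push_cast [List.length_cons]; ring
      _ ≤ G.edist a b + mlen G (b :: t) := add_le_add h1 h2

lemma chain'_adj_of_mlen : ∀ (l : List V), IsTrailList G l → mlen G l = (l.length - 1 : ℕ) →
    l.Chain' G.Adj
  | [], _, _ => List.isChain_nil
  | [_], _, _ => List.isChain_singleton _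
  | a :: b :: t, h, hm => by
    rw [IsTrailList, List.Chain', List.isChain_cons_cons] at h
    rw [mlen_cons_cons] at hm
    have h1 : (1 : ℕ∞) ≤ G.edist a b := by
      rw [ENat.one_le_iff_ne_zero]
      simp [SimpleGraph.edist_eq_zero_iff, h.1.1]
    have h2 := le_mlen_of_trail (b :: t) h.2
    have hne : G.edist a b ≠ ⊤ := by
      intro htop
      rw [htop] at hm
      simp at hm
      exact (ENat.coe_ne_top _) hm.symm
    have hne2 : mlen G (b :: t) ≠ ⊤ := by
      intro htop
      rw [htop] at hm
      simp at hm
      exact (ENat.coe_ne_top _) hm.symm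
    lift G.edist a b to ℕ using hne with d hd
    lift mlen G (b :: t) to ℕ using hne2 with m hmm
    have h1' : 1 ≤ d := by exact_mod_cast h1
    have h2' : (b :: t).length - 1 ≤ m := by exact_mod_cast h2
    have hsum : d + m = (a :: b :: t).length - 1 := by exact_mod_cast hm
    simp only [List.length_cons] at hsum h2' ⊢
    have hd1 : d = 1 := by omega
    have hm1 : m = (b :: t).length - 1 := by simp [List.length_cons]; omega
    rw [List.Chain', List.isChain_cons_cons]
    constructor
    · rw [← SimpleGraph.edist_eq_one_iff_adj, ← hd, hd1, Nat.cast_one]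
    · exact chain'_adj_of_mlen (b :: t) h.2 (by rw [← hmm, hm1])

lemma trails_eq (k : ℕ) : trails G k k = {l : List V | l.length = k + 1 ∧ l.Chain' G.Adj} := by
  ext l
  constructor
  · rintro ⟨h1, h2, h3⟩
    exact ⟨h1, chain'_adj_of_mlen l h2 (by rw [h3, h1]; simp)⟩
  · rintro ⟨h1, h2⟩
    refine ⟨h1, h2.imp fun a b hab => ⟨hab.ne, hab.reachable⟩, ?_⟩
    rw [mlen_of_chain' l h2, h1]
    simp

end Aux
section Aux2
variable {G : SimpleGraph V}

lemma mlen_append_cons : ∀ (p : List V) (a : V) (q : List V),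
    mlen G (p ++ a :: q) = mlen G (p ++ [a]) + mlen G (a :: q)
  | [], a, q => by simp [mlen_single]
  | [x], a, q => by simp [mlen_cons_cons, mlen_single, add_assoc]
  | x :: y :: p, a, q => by
    have := mlen_append_cons (y :: p) a q
    simp only [List.cons_append, mlen_cons_cons] at *
    rw [this, add_assoc]

lemma eraseIdx_mid : ∀ (p : List V) (x c z : V) (q : List V),
    (p ++ x :: c :: z :: q).eraseIdx (p.length + 1) = p ++ x :: z :: q
  | [], x, c, z, q => rfl
  | a :: p, x, c, z, q => by
    simp only [List.cons_append, List.length_cons, List.eraseIdx_cons_succ]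
    rw [eraseIdx_mid p x c z q]

lemma chain'_take_adj {l : List V} (h : l.Chain' G.Adj) (n : ℕ) : (l.take n).Chain' G.Adj :=
  h.take n

lemma decomp (l : List V) (i : ℕ) (h0 : 0 < i) (h1 : i + 1 < l.length) :
    l = l.take (i-1) ++ l[i-1] :: l[i] :: l[i+1] :: l.drop (i+2) ∧ (l.take (i-1)).length = i - 1 := by
  obtain ⟨j, rfl⟩ : ∃ j, i = j + 1 := ⟨i - 1, by omega⟩
  simp only [Nat.add_sub_cancel]
  have e1 : l.drop j = l[j] :: l.drop (j+1) := List.drop_eq_getElem_cons (by omega)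
  have e2 : l.drop (j+1) = l[j+1] :: l.drop (j+2) := List.drop_eq_getElem_cons (by omega)
  have e3 : l.drop (j+2) = l[j+2] :: l.drop (j+3) := List.drop_eq_getElem_cons (by omega)
  constructor
  · conv_lhs => rw [← List.take_append_drop j l]
    rw [e1, e2, e3]
  · simp [List.length_take]; omega

lemma mlen_erase_aux (p q : List V) (x c z : V)
    (hc : (p ++ x :: c :: z :: q).Chain' G.Adj) :
    mlen G (p ++ x :: z :: q) = (p.length : ℕ∞) + G.edist x z + (q.length : ℕ∞) := by
  have hpre : (p ++ [x]).Chain' G.Adj := by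
    have : p ++ [x] = (p ++ x :: c :: z :: q).take (p.length + 1) := by
      rw [List.take_append]
      simp
    rw [this]; exact hc.take _
  have hsuf : (z :: q).Chain' G.Adj := by
    have : z :: q = (p ++ x :: c :: z :: q).drop (p.length + 2) := by
      rw [List.drop_append]
      simp
    rw [this]; exact hc.drop _
  rw [mlen_append_cons p x (z :: q), mlen_cons_cons, mlen_of_chain' _ hpre,
    mlen_of_chain' _ hsuf]
  have e1 : (p ++ [x]).length - 1 = p.length := by simp
  have e2 : (z :: q).length - 1 = q.length := by simp
  rw [e1, e2, add_assoc]

/-- The zigzag walk of `n` steps starting `a, b, a, b, …`. -/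
def zig (a b : V) : ℕ → List V
  | 0 => [a]
  | n + 1 => a :: zig b a n

@[simp] lemma length_zig (a b : V) : ∀ n, (zig a b n).length = n + 1
  | 0 => rfl
  | n + 1 => by simp [zig, length_zig b a n]

lemma getElem_zig (a b : V) : ∀ (n i : ℕ) (h : i < (zig a b n).length),
    (zig a b n)[i] = if Even i then a else b
  | 0, 0, _ => rfl
  | n+1, 0, _ => rfl
  | n+1, i+1, h => by
    simp only [zig, List.getElem_cons_succ]
    rw [getElem_zig b a n i (by simpa [zig] using h)]
    by_cases he : Even i <;> simp [he, Nat.even_add_one]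

lemma chain'_zig_adj : ∀ (n : ℕ) (a b : V), G.Adj a b → (zig a b n).Chain' G.Adj
  | 0, a, b, _ => List.isChain_singleton _
  | n+1, a, b, hab => by
    cases n with
    | zero => simpa [zig, List.Chain'] using hab
    | succ m =>
      have h2 := chain'_zig_adj (m+1) b a hab.symm
      rw [show zig a b (m+1+1) = a :: b :: zig a b m from rfl, List.Chain', List.isChain_cons_cons]
      exact ⟨hab, h2⟩
end Aux2
section Aux3
variable {G : SimpleGraph V}

/-- The set of zigzag walks with `k` steps. -/
def zigSet (G : SimpleGraph V) (k : ℕ) : Set (List V) :=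
  Set.range fun d : G.Dart => zig d.toProd.1 d.toProd.2 k

lemma zig_mem_trails {a b : V} (hab : G.Adj a b) (k : ℕ) : zig a b k ∈ trails G k k := by
  rw [trails_eq]
  exact ⟨by simp, chain'_zig_adj k a b hab⟩

lemma zigSet_subset_trails (k : ℕ) : zigSet G k ⊆ trails G k k := by
  rintro l ⟨d, rfl⟩
  exact zig_mem_trails d.adj k

lemma bdry_single (n : ℕ) (l : List V) :
    bdry G n (Finsupp.single l 1) = bdryElt G n l := by
  rw [bdry, Finsupp.lsum_single, LinearMap.toSpanSingleton_apply, one_smul]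

lemma bdryElt_cons3 (n : ℕ) (x y z : V) :
    bdryElt G n [x, y, z] =
      if G.edist x z = (n : ℕ∞) then -Finsupp.single [x, z] 1 else 0 := by
  rw [bdryElt]
  have h2 : Finset.Ioo 0 ([x,y,z].length - 1) = {1} := rfl
  rw [h2, Finset.sum_singleton]
  have he : [x,y,z].eraseIdx 1 = [x,z] := rfl
  rw [he]
  have hm : mlen G [x,z] = G.edist x z := by
    rw [mlen_cons_cons, mlen_single, add_zero]
  rw [hm]
  split <;> simp

lemma cons3_mem_etrails {x y z : V} (hxy : G.Adj x y) (hyz : G.Adj y z) (hxz : x ≠ z) :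
    [x, y, z] ∈ etrails G 2 2 := by
  refine ⟨⟨rfl, ?_, ?_⟩, ?_⟩
  · rw [IsTrailList, List.Chain', List.isChain_cons_cons]
    exact ⟨⟨hxy.ne, hxy.reachable⟩, by simpa using ⟨hyz.ne, hyz.reachable⟩⟩
  · rw [mlen_cons_cons, mlen_cons_cons, mlen_single, SimpleGraph.edist_eq_one_iff_adj.mpr hxy,
      SimpleGraph.edist_eq_one_iff_adj.mpr hyz]
    rfl
  · simp [hxy.ne, hxz, hyz.ne]

lemma tri_free (h2 : EMHkk G 2 = ⊥) {x y z : V} (hxy : G.Adj x y) (hyz : G.Adj y z) :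
    ¬ G.Adj x z := by
  intro hxz
  have hmem : Finsupp.single [x,y,z] (1 : ℤ) ∈ EMHkk G 2 := by
    refine Submodule.mem_inf.mpr ⟨?_, ?_⟩
    · exact Finsupp.single_mem_supported ℤ 1 (cons3_mem_etrails hxy hyz hxz.ne)
    · rw [LinearMap.mem_ker, bdry_single, bdryElt_cons3]
      rw [if_neg]
      rw [SimpleGraph.edist_eq_one_iff_adj.mpr hxz]
      decide
  rw [h2, Submodule.mem_bot] at hmem
  exact one_ne_zero (Finsupp.single_eq_zero.mp hmem)

lemma ucn (h2 : EMHkk G 2 = ⊥) {x y y' z : V} (hxy : G.Adj x y) (hyz : G.Adj y z)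
    (hxy' : G.Adj x y') (hyz' : G.Adj y' z) (hxz : x ≠ z) : y = y' := by
  by_contra hne
  have hmem : Finsupp.single [x,y,z] (1 : ℤ) - Finsupp.single [x,y',z] 1 ∈ EMHkk G 2 := by
    refine Submodule.mem_inf.mpr ⟨?_, ?_⟩
    · exact Submodule.sub_mem _
        (Finsupp.single_mem_supported ℤ 1 (cons3_mem_etrails hxy hyz hxz))
        (Finsupp.single_mem_supported ℤ 1 (cons3_mem_etrails hxy' hyz' hxz))
    · rw [LinearMap.mem_ker, map_sub, bdry_single, bdry_single, bdryElt_cons3, bdryElt_cons3,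
        sub_self]
  rw [h2, Submodule.mem_bot, sub_eq_zero] at hmem
  have := Finsupp.single_left_injective (one_ne_zero (α := ℤ)) hmem
  simp only [List.cons.injEq] at this
  exact hne this.2.1

lemma edist_eq_two (h2 : EMHkk G 2 = ⊥) {x c z : V} (hxc : G.Adj x c) (hcz : G.Adj c z)
    (hxz : x ≠ z) : G.edist x z = 2 := by
  have hnadj : ¬ G.Adj x z := tri_free h2 hxc hcz
  have hle : G.edist x z ≤ 2 := by
    calc G.edist x z ≤ G.edist x c + G.edist c z := SimpleGraph.edist_triangle
      _ = 2 := by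
        rw [SimpleGraph.edist_eq_one_iff_adj.mpr hxc, SimpleGraph.edist_eq_one_iff_adj.mpr hcz]
        rfl
  have hne0 : G.edist x z ≠ 0 := by simp [SimpleGraph.edist_eq_zero_iff, hxz]
  have hne1 : G.edist x z ≠ 1 := fun h => hnadj (SimpleGraph.edist_eq_one_iff_adj.mp h)
  have htop : G.edist x z ≠ ⊤ := fun ht => by
    rw [ht] at hle
    exact (by decide : ¬ ((⊤:ℕ∞) ≤ 2)) hle
  lift G.edist x z to ℕ using htop with e he
  have : e ≤ 2 := by exact_mod_cast hle
  have h0 : e ≠ 0 := by exact_mod_cast hne0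
  have h1 : e ≠ 1 := by exact_mod_cast hne1
  have : e = 2 := by omega
  exact_mod_cast congrArg (Nat.cast : ℕ → ℕ∞) this

end Aux3
section Aux4
variable {G : SimpleGraph V}

lemma decomp' (l : List V) (j : ℕ) (h1 : j + 2 < l.length) :
    ∃ (p q : List V) (x c z : V), l = p ++ x :: c :: z :: q ∧ p.length = j ∧
      q.length = l.length - (j + 3) ∧
      x = l[j] ∧ c = l[j+1] ∧ z = l[j+2] := by
  obtain ⟨hdec, hlen⟩ := decomp l (j+1) (by omega) (by omega)
  simp only [Nat.add_sub_cancel] at hdec hlen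
  exact ⟨l.take j, l.drop (j+3), l[j], l[j+1], l[j+2], hdec, hlen, by simp, rfl, rfl, rfl⟩

lemma chain'_getElem_adj {l : List V} (hc : l.Chain' G.Adj) (j : ℕ) (h : j + 1 < l.length) :
    G.Adj l[j] l[j+1] := by
  rw [List.Chain', List.isChain_iff_getElem] at hc
  have := hc j (by omega)
  simpa using this

lemma eraseIdx_w (w : List V) (hc : w.Chain' G.Adj) (j : ℕ) (h1 : j + 2 < w.length) :
    mlen G (w.eraseIdx (j+1)) =
      (j : ℕ∞) + G.edist w[j] w[j+2] + ((w.length - (j+3) : ℕ) : ℕ∞) := by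
  obtain ⟨p, q, x, c, z, hdec, hp, hq, hx, hcc, hz⟩ := decomp' w j h1
  have herase : w.eraseIdx (j+1) = p ++ x :: z :: q := by
    conv_lhs => rw [hdec]
    rw [show j + 1 = p.length + 1 by omega]
    exact eraseIdx_mid p x c z q
  have hchain : (p ++ x :: c :: z :: q).Chain' G.Adj := hdec ▸ hc
  rw [herase, mlen_erase_aux p q x c z hchain, hp, hq, hx, hz]

lemma mlen_eraseIdx_zig {a b : V} {k : ℕ} (hab : G.Adj a b) (j : ℕ)
    (h1 : j + 2 < (zig a b k).length) :
    mlen G ((zig a b k).eraseIdx (j+1)) = ((k - 2 : ℕ) : ℕ∞) := by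
  have hc := chain'_zig_adj k a b hab
  rw [eraseIdx_w (zig a b k) hc j h1]
  have hxz : (zig a b k)[j] = (zig a b k)[j+2] := by
    rw [getElem_zig, getElem_zig]
    have : Even (j+2) ↔ Even j := by simp [Nat.even_add]
    by_cases he : Even j <;> simp [he, this]
  rw [← hxz, SimpleGraph.edist_self]
  rw [length_zig] at h1 ⊢
  have : (j : ℕ∞) + 0 + ((k + 1 - (j+3) : ℕ) : ℕ∞) = ((j + (k + 1 - (j+3)) : ℕ) : ℕ∞) := by
    push_cast; ring
  rw [this]
  congr 1
  omega

lemma erase_unique (h2 : EMHkk G 2 = ⊥) {k : ℕ}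
    (w : List V) (hwlen : w.length = k + 1) (hwc : w.Chain' G.Adj)
    (j : ℕ) (hj : j + 2 ≤ k)
    (hne : w[j]'(by omega) ≠ w[j+2]'(by omega))
    (l : List V) (hllen : l.length = k + 1) (hlc : l.Chain' G.Adj)
    (i : ℕ) (hi : i + 2 ≤ k)
    (heq : l.eraseIdx (i+1) = w.eraseIdx (j+1)) : l = w ∧ i = j := by
  have hnadj : ¬ G.Adj (w[j]'(by omega)) (w[j+2]'(by omega)) :=
    tri_free h2 (chain'_getElem_adj hwc j (by omega)) (chain'_getElem_adj hwc (j+1) (by omega))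
  have hylen : (w.eraseIdx (j+1)).length = k := by
    rw [List.length_eraseIdx, hwlen]; simp; omega
  have hyw_lt : ∀ t (ht : t < j + 1) (ht' : t < k), (w.eraseIdx (j+1))[t]'(by omega) =
      w[t]'(by omega) := fun t ht ht' => List.getElem_eraseIdx_of_lt (l := w) (i := j+1) (j := t) (by omega) ht
  have hyw_ge : ∀ t (ht : j + 1 ≤ t) (ht' : t < k), (w.eraseIdx (j+1))[t]'(by omega) =
      w[t+1]'(by omega) := fun t ht ht' => List.getElem_eraseIdx_of_ge (l := w) (i := j+1) (j := t) (by omega) ht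
  have hellen : (l.eraseIdx (i+1)).length = k := by
    rw [List.length_eraseIdx, hllen]; simp; omega
  have hyl_lt : ∀ t (ht : t < i + 1) (ht' : t < k), (w.eraseIdx (j+1))[t]'(by omega) =
      l[t]'(by omega) := fun t ht ht' => by
    rw [← List.getElem_of_eq heq (by omega)]
    exact List.getElem_eraseIdx_of_lt (l := l) (i := i+1) (j := t) (by omega) ht
  have hyl_ge : ∀ t (ht : i + 1 ≤ t) (ht' : t < k), (w.eraseIdx (j+1))[t]'(by omega) =
      l[t+1]'(by omega) := fun t ht ht' => by
    rw [← List.getElem_of_eq heq (by omega)]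
    exact List.getElem_eraseIdx_of_ge (l := l) (i := i+1) (j := t) (by omega) ht
  rcases lt_trichotomy i j with hlt | heqj | hgt
  · exfalso
    have e1 : w[j]'(by omega) = l[j+1]'(by omega) := by
      rw [← hyw_lt j (by omega) (by omega), hyl_ge j (by omega) (by omega)]
    have e2 : w[j+2]'(by omega) = l[j+2]'(by omega) := by
      rw [← hyw_ge (j+1) (by omega) (by omega), hyl_ge (j+1) (by omega) (by omega)]
    exact hnadj (e1 ▸ e2 ▸ chain'_getElem_adj hlc (j+1) (by omega))
  · subst heqj
    refine ⟨?_, rfl⟩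
    have elo : ∀ t (ht : t < i + 1), l[t]'(by omega) = w[t]'(by omega) := fun t ht => by
      rw [← hyl_lt t ht (by omega), hyw_lt t ht (by omega)]
    have ehi : ∀ t (ht : i + 1 ≤ t) (ht' : t < k), l[t+1]'(by omega) = w[t+1]'(by omega) :=
      fun t ht ht' => by rw [← hyl_ge t ht ht', hyw_ge t ht ht']
    have emid : l[i+1]'(by omega) = w[i+1]'(by omega) := by
      have a1 : G.Adj (w[i]'(by omega)) (w[i+1]'(by omega)) := chain'_getElem_adj hwc i (by omega)
      have a2 : G.Adj (w[i+1]'(by omega)) (w[i+2]'(by omega)) :=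
        chain'_getElem_adj hwc (i+1) (by omega)
      have b1 : G.Adj (w[i]'(by omega)) (l[i+1]'(by omega)) := by
        have := chain'_getElem_adj hlc i (by omega)
        rwa [elo i (by omega)] at this
      have b2 : G.Adj (l[i+1]'(by omega)) (w[i+2]'(by omega)) := by
        have := chain'_getElem_adj hlc (i+1) (by omega)
        rwa [ehi (i+1) (by omega) (by omega)] at this
      exact (ucn h2 a1 a2 b1 b2 hne).symm
    refine List.ext_getElem (by omega) ?_
    intro t ht1 ht2
    rcases lt_trichotomy t (i+1) with h | h | h
    · exact elo t h
    · subst h; exact emid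
    · obtain ⟨s, rfl⟩ : ∃ s, t = s + 1 := ⟨t - 1, by omega⟩
      exact ehi s (by omega) (by omega)
  · exfalso
    have e1 : w[j]'(by omega) = l[j]'(by omega) := by
      rw [← hyw_lt j (by omega) (by omega), hyl_lt j (by omega) (by omega)]
    have e2 : w[j+2]'(by omega) = l[j+1]'(by omega) := by
      rw [← hyw_ge (j+1) (by omega) (by omega), hyl_lt (j+1) (by omega) (by omega)]
    exact hnadj (e1 ▸ e2 ▸ chain'_getElem_adj hlc j (by omega))

end Aux4
section Aux5
variable {G : SimpleGraph V}

lemma zig_char {k : ℕ} (hk : 1 ≤ k) (l : List V) (hlen : l.length = k + 1)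
    (hc : l.Chain' G.Adj)
    (hall : ∀ j (h : j + 2 < l.length), l[j+2] = l[j]'(by omega)) :
    l ∈ zigSet G k := by
  have h0 : 0 < l.length := by omega
  have h1 : 1 < l.length := by omega
  have hadj : G.Adj l[0] l[1] := chain'_getElem_adj hc 0 h1
  refine ⟨⟨(l[0], l[1]), hadj⟩, ?_⟩
  have key : ∀ i (h : i < l.length), l[i] = if Even i then l[0] else l[1] := by
    intro i
    induction i using Nat.twoStepInduction with
    | zero => intro h; simp
    | one => intro h; simp [Nat.not_even_one]
    | more n ih _ =>
      intro h
      rw [hall n h, ih (by omega)]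
      have : Even (n + 2) ↔ Even n := by simp [Nat.even_add]
      by_cases he : Even n <;> simp [he, this]
  refine (List.ext_getElem (by simp [hlen]) ?_).symm
  intro i h1' h2'
  simp only [getElem_zig]
  exact key i h1' 

lemma MHkk_eq_supported (h2 : EMHkk G 2 = ⊥) {k : ℕ} (hk : 2 ≤ k) :
    MHkk G k = Finsupp.supported ℤ ℤ (zigSet G k) := by
  apply le_antisymm
  · intro c hcm
    obtain ⟨hMC, hker⟩ := Submodule.mem_inf.mp hcm
    rw [MC, Finsupp.mem_supported] at hMC
    rw [Finsupp.mem_supported]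
    intro w hw
    by_contra hwz
    have hwtr := hMC hw
    rw [trails_eq] at hwtr
    obtain ⟨hwlen, hwc⟩ := hwtr
    have hex : ∃ j, ∃ (h : j + 2 < w.length), w[j+2] ≠ w[j]'(by omega) := by
      by_contra hall
      push_neg at hall
      exact hwz (zig_char (by omega) w hwlen hwc hall)
    obtain ⟨j, hjlt, hne⟩ := hex
    have hjk : j + 2 ≤ k := by omega
    -- adjacency facts
    have a1 : G.Adj (w[j]'(by omega)) (w[j+1]'(by omega)) := chain'_getElem_adj hwc j (by omega)
    have a2 : G.Adj (w[j+1]'(by omega)) (w[j+2]'(by omega)) :=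
      chain'_getElem_adj hwc (j+1) (by omega)
    have hd2 : G.edist (w[j]'(by omega)) (w[j+2]'(by omega)) = 2 :=
      edist_eq_two h2 a1 a2 (Ne.symm hne)
    set y := w.eraseIdx (j+1) with hy
    have h0 : bdry G k c = 0 := LinearMap.mem_ker.mp hker
    have hmly : mlen G y = (k : ℕ∞) := by
      rw [hy, eraseIdx_w w hwc j (by omega), hd2, hwlen]
      have : (j : ℕ∞) + 2 + ((k + 1 - (j+3) : ℕ) : ℕ∞) = ((j + 2 + (k + 1 - (j+3)) : ℕ) : ℕ∞) := by
        push_cast; ring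
      rw [this]
      congr 1
      omega
    -- uniqueness of producing y
    have huniq : ∀ (l : List V), l ∈ trails G k k → ∀ i, i ∈ Finset.Ioo 0 (l.length - 1) →
        l.eraseIdx i = y → l = w ∧ i = j + 1 := by
      intro l hltr i hi hei
      rw [trails_eq] at hltr
      obtain ⟨hllen, hlc⟩ := hltr
      rw [Finset.mem_Ioo, hllen] at hi
      obtain ⟨i', rfl⟩ : ∃ i', i = i' + 1 := ⟨i - 1, by omega⟩
      have := erase_unique h2 w hwlen hwc j hjk (Ne.symm hne) l hllen hlc i' (by omega) (hy ▸ hei)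
      exact ⟨this.1, by omega⟩
    -- evaluate boundary at y
    have hval : (bdry G k c) y = c w * (-1 : ℤ) ^ (j + 1) := by
      rw [bdry, Finsupp.lsum_apply, Finsupp.sum, Finsupp.finset_sum_apply]
      rw [Finset.sum_eq_single w]
      · rw [LinearMap.toSpanSingleton_apply, Finsupp.smul_apply, smul_eq_mul]
        congr 1
        rw [bdryElt, Finsupp.finset_sum_apply]
        rw [Finset.sum_eq_single (j+1)]
        · rw [if_pos (by rw [← hy]; exact hmly)]
          rw [Finsupp.smul_apply, ← hy, Finsupp.single_eq_same]
          simp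
        · intro i hi hine
          split
          · rw [Finsupp.smul_apply, Finsupp.single_apply, if_neg, smul_zero]
            intro hei
            exact hine (huniq w (hMC hw) i hi hei).2
          · rfl
        · intro hnotmem
          exfalso
          apply hnotmem
          rw [Finset.mem_Ioo, hwlen]
          omega
      · intro l hl hlne
        rw [LinearMap.toSpanSingleton_apply, Finsupp.smul_apply, smul_eq_mul]
        have : bdryElt G k l y = 0 := by
          rw [bdryElt, Finsupp.finset_sum_apply]
          apply Finset.sum_eq_zero
          intro i hi
          split
          · rw [Finsupp.smul_apply, Finsupp.single_apply, if_neg, smul_zero]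
            intro hei
            exact hlne (huniq l (hMC hl) i hi hei).1
          · rfl
        rw [this, mul_zero]
      · intro hnotmem
        exact absurd hw hnotmem
    rw [h0] at hval
    have hcw : c w = 0 := by
      have hpow : ((-1 : ℤ) ^ (j+1)) ≠ 0 := pow_ne_zero _ (by norm_num)
      have := hval.symm
      exact (mul_eq_zero.mp this).resolve_right hpow
    exact (Finsupp.mem_support_iff.mp hw) hcw
  · intro c hc
    refine Submodule.mem_inf.mpr ⟨?_, ?_⟩
    · exact Finsupp.supported_mono (zigSet_subset_trails k) hc
    · rw [LinearMap.mem_ker, bdry, Finsupp.lsum_apply, Finsupp.sum]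
      apply Finset.sum_eq_zero
      intro l hl
      have hlz : l ∈ zigSet G k := (Finsupp.mem_supported ℤ c).mp hc hl
      obtain ⟨d, rfl⟩ := hlz
      rw [LinearMap.toSpanSingleton_apply]
      have : bdryElt G k (zig d.toProd.1 d.toProd.2 k) = 0 := by
        rw [bdryElt]
        apply Finset.sum_eq_zero
        intro i hi
        rw [Finset.mem_Ioo, length_zig] at hi
        obtain ⟨j, rfl⟩ : ∃ j, i = j + 1 := ⟨i - 1, by omega⟩
        rw [if_neg]
        rw [mlen_eraseIdx_zig d.adj j (by rw [length_zig]; omega)]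
        intro hcast
        have : k - 2 = k := by exact_mod_cast hcast
        omega
      rw [this, smul_zero]

lemma trails_one_eq : trails G 1 1 = zigSet G 1 := by
  ext l
  constructor
  · intro hl
    rw [trails_eq] at hl
    obtain ⟨hlen, hc⟩ := hl
    obtain ⟨a, b, rfl⟩ := List.length_eq_two.mp hlen
    have hadj : G.Adj a b := List.isChain_pair.mp hc
    exact ⟨⟨(a, b), hadj⟩, rfl⟩
  · exact fun hl => zigSet_subset_trails 1 hl

lemma MHkk_one_eq : MHkk G 1 = Finsupp.supported ℤ ℤ (zigSet G 1) := by
  have hker : MC G 1 1 ≤ LinearMap.ker (bdry G 1) := by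
    intro c hc
    rw [LinearMap.mem_ker, bdry, Finsupp.lsum_apply, Finsupp.sum]
    apply Finset.sum_eq_zero
    intro l hl
    have hltr : l ∈ trails G 1 1 := (Finsupp.mem_supported ℤ c).mp hc hl
    have hlen : l.length = 2 := hltr.1
    rw [LinearMap.toSpanSingleton_apply]
    have : bdryElt G 1 l = 0 := by
      have h10 : Finset.Ioo 0 (2 - 1) = (∅ : Finset ℕ) := rfl
      rw [bdryElt, hlen, h10, Finset.sum_empty]
    rw [this, smul_zero]
  rw [MHkk, inf_eq_left.mpr hker, MC, trails_one_eq]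

end Aux5
section Aux6
variable {G : SimpleGraph V}

lemma zig_dart_injective {k : ℕ} (hk : 1 ≤ k) :
    Function.Injective (fun d : G.Dart => zig d.toProd.1 d.toProd.2 k) := by
  intro d d' h
  simp only at h
  obtain ⟨j, rfl⟩ : ∃ j, k = j + 1 := ⟨k - 1, by omega⟩
  have h0 : d.toProd.1 = d'.toProd.1 := by
    have := congrArg (fun l : List V => l[0]?) h
    simpa [getElem?_pos, getElem_zig] using this
  have h1 : d.toProd.2 = d'.toProd.2 := by
    have := congrArg (fun l : List V => l[1]?) h
    simp only [List.getElem?_eq_getElem (by simp : 1 < (zig d.toProd.1 d.toProd.2 (j+1)).length),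
      List.getElem?_eq_getElem (by simp : 1 < (zig d'.toProd.1 d'.toProd.2 (j+1)).length)] at this
    rw [getElem_zig, getElem_zig] at this
    simpa using this
  exact SimpleGraph.Dart.ext _ _ (Prod.ext h0 h1)

lemma finrank_supported_zigSet [Fintype V] {k : ℕ} (hk : 1 ≤ k) :
    Module.finrank ℤ (Finsupp.supported ℤ ℤ (zigSet G k)) = 2 * G.edgeSet.ncard := by
  haveI : DecidableEq V := Classical.decEq V
  haveI : DecidableRel G.Adj := Classical.decRel _
  haveI : DecidableEq (List V) := Classical.decEq _
  have e1 : Module.finrank ℤ (Finsupp.supported ℤ ℤ (zigSet G k)) =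
      Module.finrank ℤ (↥(zigSet G k) →₀ ℤ) :=
    LinearEquiv.finrank_eq (Finsupp.supportedEquivFinsupp _)
  haveI : Fintype ↥(zigSet G k) := Set.fintypeRange _
  rw [e1, Module.finrank_finsupp_self]
  have e2 : Fintype.card ↥(zigSet G k) = Fintype.card G.Dart := by
    rw [← Nat.card_eq_fintype_card, ← Nat.card_eq_fintype_card]
    exact Nat.card_range_of_injective (zig_dart_injective hk)
  rw [e2, SimpleGraph.dart_card_eq_twice_card_edges]
  congr 1
  rw [← SimpleGraph.coe_edgeFinset, Set.ncard_coe_finset]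

end Aux6

/-- Corollary to Theorem 3.20: if `EMH_{n,n}(G) = 0` for all `2 ≤ n ≤ k`
(`k ≥ 2`) and `G` is finite, then `rank MH_{k,k}(G) = 2|E| = rank MH_{1,1}(G)`. -/
theorem rank_mh_eq_twice_edges {V : Type*} [Fintype V] (G : SimpleGraph V) (k : ℕ)
    (hk : 2 ≤ k) (hEMH : ∀ n, 2 ≤ n → n ≤ k → EMHkk G n = ⊥) :
    Module.finrank ℤ (MHkk G k) = 2 * G.edgeSet.ncard ∧
    Module.finrank ℤ (MHkk G 1) = 2 * G.edgeSet.ncard := by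
  have h2 : EMHkk G 2 = ⊥ := hEMH 2 le_rfl hk
  constructor
  · rw [MHkk_eq_supported h2 hk]
    exact finrank_supported_zigSet (by omega)
  · rw [MHkk_one_eq]
    exact finrank_supported_zigSet le_rfl
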